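/- Let R be a commutative ring, q a unit of R, and A an associative unital R-algebra. Suppose a, b, c, d and a′, b′, c′, d′ are elements of A such that each of a, b, c, d commutes with each of a′, b′, c′, d′, and both quadruples (a,b,c,d) and (a′,b′,c′,d′) satisfy the fun_q(GL₂) relations. Define a″ = a·a′ + b·c′, b″ = a·b′ + b·d′, c″ = c·a′ + d·c′, d″ = c·b′ + d·d′ (the entries of the matrix tensor product T·T′). Then the quadruple (a″, b″, c″, d″) again satisfies the fun_q(GL₂) relations, and a″·d″ − q·b″·c″ = (a·d − q·b·c)·(a′·d′ − q·b′·c′); in particular if a·d − q·b·c = 1 and a′·d′ − q·b′·c′ = 1 then a″·d″ − q·b″·c″ = 1. -/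

import Mathlib

/-- The `fun_q(GL₂)` relations for a quadruple `(a, b, c, d)` of elements of an
associative unital `R`-algebra `A`, with `q` a unit of `R`. -/
def FunqGL2 {R A : Type*} [CommRing R] [Ring A] [Algebra R A]
    (q : Rˣ) (a b c d : A) : Prop :=
  a * b = (q : R) • (b * a) ∧ a * c = (q : R) • (c * a) ∧
  b * d = (q : R) • (d * b) ∧ c * d = (q : R) • (d * c) ∧
  b * c = c * b ∧ a * d - d * a = ((q : R) - ((q⁻¹ : Rˣ) : R)) • (b * c)

section Aux
variable {R A : Type*} [CommRing R] [Ring A] [Algebra R A]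

private lemma mulAux3 {t : R} {x y : A} (h : y * x = t • (x * y)) (z : A) :
    y * (x * z) = t • (x * (y * z)) := by
  rw [← mul_assoc, h, smul_mul_assoc, mul_assoc]

private lemma commAux3 {x y : A} (h : y * x = x * y) (z : A) :
    y * (x * z) = x * (y * z) := by
  rw [← mul_assoc, h, mul_assoc]

private lemma daAux3 {s t : R} {a b c d : A} (h : d * a = a * d - (s - t) • (b * c)) (z : A) :
    d * (a * z) = a * (d * z) - (s - t) • (b * (c * z)) := by
  rw [← mul_assoc, h, sub_mul, smul_mul_assoc, mul_assoc, mul_assoc]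

end Aux

/-- the entries of the matrix tensor product `T·T′` of two commuting
quadruples satisfying the `fun_q(GL₂)` relations again satisfy them, and the
quantum determinant is multiplicative. -/
theorem funqGL2_coproduct
    {R A : Type*} [CommRing R] [Ring A] [Algebra R A]
    (q : Rˣ) (a b c d a' b' c' d' : A)
    (h : FunqGL2 q a b c d) (h' : FunqGL2 q a' b' c' d')
    (hcomm : ∀ x ∈ ({a, b, c, d} : Set A), ∀ y ∈ ({a', b', c', d'} : Set A),
      Commute x y) :
    FunqGL2 q (a * a' + b * c') (a * b' + b * d') (c * a' + d * c') (c * b' + d * d') ∧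
    (a * a' + b * c') * (c * b' + d * d') -
        (q : R) • ((a * b' + b * d') * (c * a' + d * c')) =
      (a * d - (q : R) • (b * c)) * (a' * d' - (q : R) • (b' * c')) ∧
    (a * d - (q : R) • (b * c) = 1 → a' * d' - (q : R) • (b' * c') = 1 →
      (a * a' + b * c') * (c * b' + d * d') -
          (q : R) • ((a * b' + b * d') * (c * a' + d * c')) = 1) := by
  set s : R := (q : R) with hs
  set t : R := ((q⁻¹ : Rˣ) : R) with ht
  have hst : s * t = 1 := by rw [hs, ht]; exact_mod_cast q.mul_inv
  have hts : t * s = 1 := by rw [mul_comm]; exact hst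
  have hst' : ∀ x : R, s * (t * x) = x := fun x => by rw [← mul_assoc, hst, one_mul]
  have hts' : ∀ x : R, t * (s * x) = x := fun x => by rw [← mul_assoc, hts, one_mul]
  obtain ⟨hab, hac, hbd, hcd, hbc, had⟩ := h
  obtain ⟨hab', hac', hbd', hcd', hbc', had'⟩ := h'
  have hba : b * a = t • (a * b) := by rw [hab, smul_smul, hts, one_smul]
  have hca : c * a = t • (a * c) := by rw [hac, smul_smul, hts, one_smul]
  have hdb : d * b = t • (b * d) := by rw [hbd, smul_smul, hts, one_smul]
  have hdc : d * c = t • (c * d) := by rw [hcd, smul_smul, hts, one_smul]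
  have hcb : c * b = b * c := hbc.symm
  have hda : d * a = a * d - (s - t) • (b * c) := by
    rw [eq_sub_iff_add_eq, ← eq_sub_iff_add_eq', ← had]
  have hba' : b' * a' = t • (a' * b') := by rw [hab', smul_smul, hts, one_smul]
  have hca' : c' * a' = t • (a' * c') := by rw [hac', smul_smul, hts, one_smul]
  have hdb' : d' * b' = t • (b' * d') := by rw [hbd', smul_smul, hts, one_smul]
  have hdc' : d' * c' = t • (c' * d') := by rw [hcd', smul_smul, hts, one_smul]
  have hcb' : c' * b' = b' * c' := hbc'.symm
  have hda' : d' * a' = a' * d' - (s - t) • (b' * c') := by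
    rw [eq_sub_iff_add_eq, ← eq_sub_iff_add_eq', ← had']
  have C : ∀ x ∈ ({a, b, c, d} : Set A), ∀ y ∈ ({a', b', c', d'} : Set A),
      y * x = x * y := fun x hx y hy => (hcomm x hx y hy).eq.symm
  have ca : a ∈ ({a, b, c, d} : Set A) := by simp
  have cb : b ∈ ({a, b, c, d} : Set A) := by simp
  have cc : c ∈ ({a, b, c, d} : Set A) := by simp
  have cd : d ∈ ({a, b, c, d} : Set A) := by simp
  have ca' : a' ∈ ({a', b', c', d'} : Set A) := by simp
  have cb' : b' ∈ ({a', b', c', d'} : Set A) := by simp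
  have cc' : c' ∈ ({a', b', c', d'} : Set A) := by simp
  have cd' : d' ∈ ({a', b', c', d'} : Set A) := by simp
  have Qaa := C a ca a' ca'
  have Qab := C a ca b' cb'
  have Qac := C a ca c' cc'
  have Qad := C a ca d' cd'
  have Qba := C b cb a' ca'
  have Qbb := C b cb b' cb'
  have Qbc := C b cb c' cc'
  have Qbd := C b cb d' cd'
  have Qca := C c cc a' ca'
  have Qcb := C c cc b' cb'
  have Qcc := C c cc c' cc'
  have Qcd := C c cc d' cd'
  have Qda := C d cd a' ca'
  have Qdb := C d cd b' cb'
  have Qdc := C d cd c' cc'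
  have Qdd := C d cd d' cd'
  have hdet : (a * a' + b * c') * (c * b' + d * d') -
      s • ((a * b' + b * d') * (c * a' + d * c')) =
      (a * d - s • (b * c)) * (a' * d' - s • (b' * c')) := by
    simp only [mul_add, add_mul, mul_sub, sub_mul, smul_add, smul_sub,
      mul_smul_comm, smul_mul_assoc, mul_assoc,
      hba, hca, hdb, hdc, hcb, hda, hba', hca', hdb', hdc', hcb', hda',
      mulAux3 hba, mulAux3 hca, mulAux3 hdb, mulAux3 hdc, commAux3 hcb, daAux3 hda,
      mulAux3 hba', mulAux3 hca', mulAux3 hdb', mulAux3 hdc', commAux3 hcb', daAux3 hda',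
      Qaa, Qab, Qac, Qad, Qba, Qbb, Qbc, Qbd, Qca, Qcb, Qcc, Qcd, Qda, Qdb, Qdc, Qdd,
      commAux3 Qaa, commAux3 Qab, commAux3 Qac, commAux3 Qad,
      commAux3 Qba, commAux3 Qbb, commAux3 Qbc, commAux3 Qbd,
      commAux3 Qca, commAux3 Qcb, commAux3 Qcc, commAux3 Qcd,
      commAux3 Qda, commAux3 Qdb, commAux3 Qdc, commAux3 Qdd,
      smul_smul, hst, hts, hst', hts', one_smul]
    match_scalars <;> (first | ring1 | linear_combination -hst)
  refine ⟨⟨?_, ?_, ?_, ?_, ?_, ?_⟩, hdet, fun h1 h2 => by rw [hdet, h1, h2, one_mul]⟩ <;>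
  · simp only [mul_add, add_mul, mul_sub, sub_mul, smul_add, smul_sub,
      mul_smul_comm, smul_mul_assoc, mul_assoc,
      hba, hca, hdb, hdc, hcb, hda, hba', hca', hdb', hdc', hcb', hda',
      mulAux3 hba, mulAux3 hca, mulAux3 hdb, mulAux3 hdc, commAux3 hcb, daAux3 hda,
      mulAux3 hba', mulAux3 hca', mulAux3 hdb', mulAux3 hdc', commAux3 hcb', daAux3 hda',
      Qaa, Qab, Qac, Qad, Qba, Qbb, Qbc, Qbd, Qca, Qcb, Qcc, Qcd, Qda, Qdb, Qdc, Qdd,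
      commAux3 Qaa, commAux3 Qab, commAux3 Qac, commAux3 Qad,
      commAux3 Qba, commAux3 Qbb, commAux3 Qbc, commAux3 Qbd,
      commAux3 Qca, commAux3 Qcb, commAux3 Qcc, commAux3 Qcd,
      commAux3 Qda, commAux3 Qdb, commAux3 Qdc, commAux3 Qdd,
      smul_smul, hst, hts, hst', hts', one_smul]
    match_scalars <;> (first | ring1 | linear_combination -hst | linear_combination (-t) * hst | linear_combination -2 * hst)
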